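/- Let X, Y be strings of length n with ED(X,Y) ≤ β for some integer β ≥ 1. Fix a level p ≥ 1 and partition X into blocks X_{p,i} of length 2^p. Suppose Y = Y'_{p,0}·Y'_{p,1}·⋯·Y'_{p,m_p−1} is a partition achieving ED(X,Y) = Σ_i ED(X_{p,i}, Y'_{p,i}). Then for every i, the β-shifted edit distance between X_{p,i} and the block Y_{p,i} = Y[i·2^p .. min(n,(i+1)·2^p)) satisfies ED_β(X_{p,i}, Y_{p,i}) ≤ 2·ED(X_{p,i}, Y'_{p,i}). -/

import Mathlib

/-- Restored from older Mathlib (`Mathlib/Data/List/EditDistance/Defs.lean`), removed since. -/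
structure Levenshtein.Cost (α β δ : Type*) where
  delete : α → δ
  insert : β → δ
  substitute : α → β → δ

/-- Restored from older Mathlib: unit costs. -/
def Levenshtein.defaultCost {α : Type*} [DecidableEq α] : Levenshtein.Cost α α ℕ where
  delete _ := 1
  insert _ := 1
  substitute a b := if a = b then 0 else 1

/-- Restored from older Mathlib. -/
def Levenshtein.impl {α β δ : Type*} [AddZeroClass δ] [Min δ] (C : Levenshtein.Cost α β δ)
    (xs : List α) (y : β) (d : {r : List δ // 0 < r.length}) : {r : List δ // 0 < r.length} :=
  let ⟨ds, w⟩ := d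
  xs.zip (ds.zip ds.tail) |>.foldr
    (init := ⟨[C.insert y + ds.getLast (List.length_pos_iff_ne_nil.mp w)], by simp⟩)
    (fun ⟨x, d₀, d₁⟩ ⟨r, w⟩ =>
      ⟨min (C.delete x + r[0]) (min (C.insert y + d₀) (C.substitute x y + d₁)) :: r, by simp⟩)

/-- Restored from older Mathlib. -/
def suffixLevenshtein {α β δ : Type*} [AddZeroClass δ] [Min δ] (C : Levenshtein.Cost α β δ)
    (xs : List α) (ys : List β) : {r : List δ // 0 < r.length} :=
  ys.foldr
    (Levenshtein.impl C xs)
    (xs.foldr (init := ⟨[0], by simp⟩) (fun a ⟨ds, w⟩ => ⟨(C.delete a + ds[0]'w) :: ds, by simp⟩))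

/-- Restored from older Mathlib: the Levenshtein distance. -/
def levenshtein {α β δ : Type*} [AddZeroClass δ] [Min δ] (C : Levenshtein.Cost α β δ)
    (xs : List α) (ys : List β) : δ :=
  let ⟨r, w⟩ := suffixLevenshtein C xs ys
  r[0]

/-- The edit distance between two lists (Levenshtein distance with unit costs). -/
def ED {α : Type*} [DecidableEq α] (X Y : List α) : ℕ :=
  levenshtein Levenshtein.defaultCost X Y

/-- The β-shifted edit distance: the minimum over shifts Δ ∈ [0, min(|U|,|V|,β)] of
the edit distance after removing Δ characters from one end of each string. -/
def EDs {α : Type*} [DecidableEq α] (β : ℕ) (U V : List α) : ℕ :=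
  (Finset.range (min (min U.length V.length) β + 1)).inf' Finset.nonempty_range_add_one
    fun Δ => min (ED (U.drop Δ) (V.take (V.length - Δ)))
                 (ED (U.take (U.length - Δ)) (V.drop Δ))

/-- The i-th block of length 2^p of a string: X[i·2^p .. min(n,(i+1)·2^p)). -/
def blk {α : Type*} (X : List α) (p i : ℕ) : List α := (X.drop (i * 2 ^ p)).take (2 ^ p)

/-- The number of blocks at level p: m_p = ⌈n / 2^p⌉. -/
def nblocks (n p : ℕ) : ℕ := (n + 2 ^ p - 1) / 2 ^ p


namespace EDport
variable {α β δ : Type*} [AddZeroClass δ] [Min δ] (C : Levenshtein.Cost α β δ)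

theorem impl_cons {x : α} {xs : List α} {y : β} {d : δ} {ds : List δ} {w}
    (w' : 0 < List.length ds) :
    Levenshtein.impl C (x :: xs) y ⟨d :: ds, w⟩ =
      let ⟨r, w⟩ := Levenshtein.impl C xs y ⟨ds, w'⟩
      ⟨min (C.delete x + r[0]) (min (C.insert y + d) (C.substitute x y + ds[0])) :: r, by simp⟩ :=
  match ds, w' with | _ :: _, _ => rfl

theorem impl_length {xs : List α} {y : β} (d : {r : List δ // 0 < r.length})
    (w : d.1.length = xs.length + 1) :
    (Levenshtein.impl C xs y d).1.length = xs.length + 1 := by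
  induction xs generalizing d with
  | nil => rfl
  | cons x xs ih =>
    dsimp [Levenshtein.impl]
    match d, w with
    | ⟨d₁ :: d₂ :: ds, _⟩, w =>
      dsimp
      congr 1
      exact ih ⟨d₂ :: ds, (by simp)⟩ (by simpa using w)

theorem suffixLevenshtein_length (xs : List α) (ys : List β) :
    (suffixLevenshtein C xs ys).1.length = xs.length + 1 := by
  induction ys with
  | nil =>
    dsimp [suffixLevenshtein]
    induction xs with
    | nil => rfl
    | cons _ xs ih =>
      simp_all
  | cons y ys ih =>
    dsimp [suffixLevenshtein]
    rw [impl_length]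
    exact ih

theorem suffixLevenshtein_cons₂ (xs : List α) (y : β) (ys : List β) :
    suffixLevenshtein C xs (y :: ys) = (Levenshtein.impl C xs) y (suffixLevenshtein C xs ys) :=
  rfl

theorem suffixLevenshtein_cons₁_aux {α} {x y : {r : List α // 0 < r.length}}
    (w₀ : x.1[0]'x.2 = y.1[0]'y.2) (w : x.1.tail = y.1.tail) : x = y := by
  match x, y with
  | ⟨hx :: tx, _⟩, ⟨hy :: ty, _⟩ => simp_all

theorem suffixLevenshtein_cons₁ (x : α) (xs : List α) (ys : List β) :
    suffixLevenshtein C (x :: xs) ys =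
      ⟨levenshtein C (x :: xs) ys :: (suffixLevenshtein C xs ys).1, by simp⟩ := by
  induction ys with
  | nil =>
    apply suffixLevenshtein_cons₁_aux <;> rfl
  | cons y ys ih =>
    apply suffixLevenshtein_cons₁_aux
    · rfl
    · rw [suffixLevenshtein_cons₂ C (x :: xs), ih, impl_cons]
      · rfl
      · simp [suffixLevenshtein_length]

theorem impl_cons_fst (x : α) (xs : List α) (y : β) (s : {r : List δ // 0 < r.length}) (d : δ)
    (ds : List δ) (hs : s.1 = d :: ds) (w' : 0 < ds.length) :
    (Levenshtein.impl C (x :: xs) y s).1[0]'(Levenshtein.impl C (x :: xs) y s).2 =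
      min (C.delete x + (Levenshtein.impl C xs y ⟨ds, w'⟩).1[0]'(Levenshtein.impl C xs y ⟨ds, w'⟩).2)
        (min (C.insert y + d) (C.substitute x y + ds[0])) := by
  obtain ⟨l, w⟩ := s
  simp only at hs
  subst hs
  match ds, w' with | _ :: _, _ => rfl

theorem levenshtein_nil_nil : levenshtein C [] [] = 0 := by
  simp [levenshtein, suffixLevenshtein]

theorem levenshtein_nil_cons (y : β) (ys : List β) :
    levenshtein C [] (y :: ys) = C.insert y + levenshtein C [] ys := by
  dsimp +unfoldPartialApp [levenshtein]
  rw [suffixLevenshtein_cons₂]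
  have hl := suffixLevenshtein_length C ([] : List α) ys
  generalize suffixLevenshtein C [] ys = s at hl ⊢
  obtain ⟨ds, w⟩ := s
  change ds.length = 1 at hl
  match ds, w, hl with
  | [d], _, _ => rfl

theorem levenshtein_cons_nil (x : α) (xs : List α) :
    levenshtein C (x :: xs) ([] : List β) = C.delete x + levenshtein C xs ([] : List β) :=
  rfl

theorem levenshtein_cons_cons (x : α) (xs : List α) (y : β) (ys : List β) :
    levenshtein C (x :: xs) (y :: ys) =
      min (C.delete x + levenshtein C xs (y :: ys))
        (min (C.insert y + levenshtein C (x :: xs) ys)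
          (C.substitute x y + levenshtein C xs ys)) := by
  have h1 := impl_cons_fst C x xs y (suffixLevenshtein C (x :: xs) ys) (levenshtein C (x :: xs) ys)
    (suffixLevenshtein C xs ys).1 (by rw [suffixLevenshtein_cons₁]) (suffixLevenshtein C xs ys).2
  exact h1

end EDport

namespace EDlib

variable {α : Type*} [DecidableEq α]

theorem ED_nil_left (ys : List α) : ED [] ys = ys.length := by
  induction ys with
  | nil => simp [ED, EDport.levenshtein_nil_nil]
  | cons y ys ih => simp [ED, EDport.levenshtein_nil_cons, Levenshtein.defaultCost] at *; omega

theorem ED_nil_right (xs : List α) : ED xs [] = xs.length := by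
  induction xs with
  | nil => simp [ED, EDport.levenshtein_nil_nil]
  | cons x xs ih => simp [ED, EDport.levenshtein_cons_nil, Levenshtein.defaultCost] at *; omega

theorem ED_cc (x : α) (xs : List α) (y : α) (ys : List α) :
    ED (x :: xs) (y :: ys) =
      min (1 + ED xs (y :: ys))
        (min (1 + ED (x :: xs) ys) ((if x = y then 0 else 1) + ED xs ys)) := by
  simp [ED, EDport.levenshtein_cons_cons, Levenshtein.defaultCost]

theorem ins_right (xs : List α) (y : α) (ys : List α) :
    ED xs (y :: ys) ≤ ED xs ys + 1 := by
  cases xs with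
  | nil => simp [ED_nil_left]
  | cons x xs => rw [ED_cc]; omega

theorem ins_left (x : α) (xs ys : List α) :
    ED (x :: xs) ys ≤ ED xs ys + 1 := by
  cases ys with
  | nil => simp [ED_nil_right]
  | cons y ys => rw [ED_cc]; omega

theorem len_le_right (xs ys : List α) : ys.length ≤ ED xs ys + xs.length := by
  induction xs generalizing ys with
  | nil => simp [ED_nil_left]
  | cons x xs ih =>
    induction ys with
    | nil => simp
    | cons y ys ih2 =>
      rw [ED_cc]
      have h1 := ih (y :: ys)
      have h3 := ih ys
      simp only [List.length_cons] at *
      split_ifs <;> omega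

theorem len_le_left (xs ys : List α) : xs.length ≤ ED xs ys + ys.length := by
  induction xs generalizing ys with
  | nil => simp
  | cons x xs ih =>
    induction ys with
    | nil => simp [ED_nil_right]
    | cons y ys ih2 =>
      rw [ED_cc]
      have h1 := ih (y :: ys)
      have h3 := ih ys
      simp only [List.length_cons] at *
      split_ifs <;> omega

theorem del_right (xs : List α) (y : α) (ys : List α) :
    ED xs ys ≤ ED xs (y :: ys) + 1 := by
  induction xs generalizing y ys with
  | nil => simp [ED_nil_left]; omega
  | cons x xs ih =>
    cases ys with
    | nil =>
      have h1 := len_le_left (x :: xs) [y]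
      have h2 := ED_nil_right (x :: xs)
      simp only [List.length_cons, List.length_nil] at *
      omega
    | cons y' ys =>
      have h1 := ih y (y' :: ys)
      have h2 := ins_left x xs (y' :: ys)
      have h3 := ins_left x xs ys
      have h4 := ih y' ys
      rw [ED_cc x xs y (y' :: ys), ED_cc x xs y' ys]
      split_ifs <;> omega

theorem del_left (x : α) (xs ys : List α) :
    ED xs ys ≤ ED (x :: xs) ys + 1 := by
  induction ys generalizing x xs with
  | nil => simp [ED_nil_right]; omega
  | cons y ys ih =>
    cases xs with
    | nil =>
      have h1 := len_le_right [x] (y :: ys)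
      have h2 := ED_nil_left (y :: ys)
      simp only [List.length_cons, List.length_nil] at *
      omega
    | cons x' xs =>
      have h1 := ih x (x' :: xs)
      have h2 := ins_right (x' :: xs) y ys
      have h3 := ins_right xs y ys
      have h4 := ih x' xs
      rw [ED_cc x (x' :: xs) y ys, ED_cc x' xs y ys]
      split_ifs <;> omega

theorem tail_both (x : α) (xs : List α) (y : α) (ys : List α) :
    ED xs ys ≤ ED (x :: xs) (y :: ys) := by
  rw [ED_cc]
  have h1 := del_right xs y ys
  have h2 := del_left x xs ys
  split_ifs <;> omega

theorem ED_upper (xs ys : List α) : ED xs ys ≤ xs.length + ys.length := by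
  induction xs generalizing ys with
  | nil => simp [ED_nil_left]
  | cons x xs ih =>
    cases ys with
    | nil => simp [ED_nil_right]
    | cons y ys =>
      rw [ED_cc]
      have h1 := ih (y :: ys)
      simp only [List.length_cons] at *
      split_ifs <;> omega

theorem drop_right (xs ys : List α) (r : ℕ) :
    ED xs (ys.drop r) ≤ ED xs ys + r := by
  induction r generalizing ys with
  | zero => simp
  | succ r ih =>
    cases ys with
    | nil => simp
    | cons y ys =>
      have h1 := ih ys
      have h2 := del_right xs y ys
      simpa using by omega

theorem drop_left (xs ys : List α) (r : ℕ) :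
    ED (xs.drop r) ys ≤ ED xs ys + r := by
  induction r generalizing xs with
  | zero => simp
  | succ r ih =>
    cases xs with
    | nil => simp
    | cons x xs =>
      have h1 := ih xs
      have h2 := del_left x xs ys
      simpa using by omega

theorem drop_both (xs ys : List α) (j : ℕ) :
    ED (xs.drop j) (ys.drop j) ≤ ED xs ys := by
  induction j generalizing xs ys with
  | zero => simp
  | succ j ih =>
    cases xs with
    | nil =>
      simp only [List.drop_nil, ED_nil_left]
      have := @List.length_drop _ (j+1) ys
      have h2 := ED_nil_left ys
      omega
    | cons x xs =>
      cases ys with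
      | nil =>
        simp only [List.drop_nil, ED_nil_right]
        have := @List.length_drop _ (j+1) (x :: xs)
        have h2 := ED_nil_right (x :: xs)
        omega
      | cons y ys =>
        have h1 := ih xs ys
        have h2 := tail_both x xs y ys
        simpa using by omega

theorem drop_gen (xs ys : List α) (j k : ℕ) :
    ED (xs.drop j) (ys.drop k) ≤ ED xs ys + ((j - k) + (k - j)) := by
  rcases le_total j k with h | h
  · have e : ys.drop k = (ys.drop j).drop (k - j) := by
      rw [List.drop_drop]; congr 1; omega
    rw [e]
    have h1 := drop_right (xs.drop j) (ys.drop j) (k - j)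
    have h2 := drop_both xs ys j
    omega
  · have e : xs.drop j = (xs.drop k).drop (j - k) := by
      rw [List.drop_drop]; congr 1; omega
    rw [e]
    have h1 := drop_left (xs.drop k) (ys.drop k) (j - k)
    have h2 := drop_both xs ys k
    omega

theorem suffix_removal (A B C D : List α) :
    ED A B ≤ ED (A ++ C) (B ++ D) + ((C.length - D.length) + (D.length - C.length)) := by
  induction A generalizing B with
  | nil =>
    have h1 := len_le_right C (B ++ D)
    simp only [List.nil_append, ED_nil_left, List.length_append] at *
    omega
  | cons a A ihA =>
    induction B with
    | nil =>
      have h1 := len_le_left ((a :: A) ++ C) D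
      simp only [List.nil_append, ED_nil_right, List.length_append, List.length_cons] at *
      omega
    | cons b B ihB =>
      have h1 := ihA (b :: B)
      have h2 := ihB
      have h3 := ihA B
      rw [ED_cc a A b B]
      simp only [List.cons_append] at *
      rw [ED_cc a (A ++ C) b (B ++ D)]
      split_ifs <;> omega

theorem suffix_addition (A B C D : List α) :
    ED (A ++ C) (B ++ D) ≤ ED A B + C.length + D.length := by
  induction A generalizing B with
  | nil =>
    have h1 := ED_upper C (B ++ D)
    simp only [List.nil_append, ED_nil_left, List.length_append] at *
    omega
  | cons a A ihA =>
    induction B with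
    | nil =>
      have h1 := ED_upper ((a :: A) ++ C) D
      simp only [List.nil_append, ED_nil_right, List.length_append, List.length_cons] at *
      omega
    | cons b B ihB =>
      have h1 := ihA (b :: B)
      have h2 := ihB
      have h3 := ihA B
      rw [ED_cc a A b B]
      simp only [List.cons_append] at *
      rw [ED_cc a (A ++ C) b (B ++ D)]
      split_ifs <;> omega

-- derived take lemmas
theorem take_right (xs ys : List α) (u : ℕ) :
    ED xs (ys.take u) ≤ ED xs ys + (ys.length - u) := by
  have h := suffix_removal xs (ys.take u) [] (ys.drop u)
  simp only [List.append_nil, List.take_append_drop, List.length_nil, List.length_drop] at h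
  omega

theorem take_left (xs ys : List α) (u : ℕ) :
    ED (xs.take u) ys ≤ ED xs ys + (xs.length - u) := by
  have h := suffix_removal (xs.take u) ys (xs.drop u) []
  simp only [List.append_nil, List.take_append_drop, List.length_nil, List.length_drop] at h
  omega

theorem take_both (xs ys : List α) (j k : ℕ) :
    ED (xs.take j) (ys.take k) ≤
      ED xs ys + (((xs.length - j) - (ys.length - k)) + ((ys.length - k) - (xs.length - j))) := by
  have h := suffix_removal (xs.take j) (ys.take k) (xs.drop j) (ys.drop k)
  simp only [List.take_append_drop, List.length_drop] at h
  omega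

theorem append_right (xs ys R : List α) :
    ED xs (ys ++ R) ≤ ED xs ys + R.length := by
  have h := suffix_addition xs ys [] R
  simp only [List.append_nil, List.length_nil] at h
  omega



theorem EDs_le_A (β : ℕ) (U V : List α) (Δ : ℕ) (h1 : Δ ≤ U.length) (h2 : Δ ≤ V.length)
    (h3 : Δ ≤ β) {M : ℕ} (h : ED (U.drop Δ) (V.take (V.length - Δ)) ≤ M) :
    EDs β U V ≤ M := by
  unfold EDs
  refine le_trans (Finset.inf'_le _ ?_) (le_trans (min_le_left _ _) h)
  simp only [Finset.mem_range]
  omega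

theorem EDs_le_B (β : ℕ) (U V : List α) (Δ : ℕ) (h1 : Δ ≤ U.length) (h2 : Δ ≤ V.length)
    (h3 : Δ ≤ β) {M : ℕ} (h : ED (U.take (U.length - Δ)) (V.drop Δ) ≤ M) :
    EDs β U V ≤ M := by
  unfold EDs
  refine le_trans (Finset.inf'_le _ ?_) (le_trans (min_le_right _ _) h)
  simp only [Finset.mem_range]
  omega

end EDlib

/-- If Y is partitioned into pieces Y'_{p,i} (given by monotone cut points c with
c 0 = 0 and c m_p = n) achieving ED(X,Y) = Σ_i ED(X_{p,i}, Y'_{p,i}) ≤ β, then for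
every i, ED_β(X_{p,i}, Y_{p,i}) ≤ 2·ED(X_{p,i}, Y'_{p,i}). -/
theorem stmt_5 {α : Type*} [DecidableEq α] (n β p : ℕ) (X Y : List α)
    (hX : X.length = n) (hY : Y.length = n) (hβ : 1 ≤ β) (hED : ED X Y ≤ β)
    (hp : 1 ≤ p) (c : ℕ → ℕ) (hc0 : c 0 = 0) (hcn : c (nblocks n p) = n) (hmono : Monotone c)
    (hopt : ED X Y = ∑ i ∈ Finset.range (nblocks n p),
      ED (blk X p i) ((Y.drop (c i)).take (c (i + 1) - c i))) :
    ∀ i < nblocks n p,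
      EDs β (blk X p i) (blk Y p i) ≤
        2 * ED (blk X p i) ((Y.drop (c i)).take (c (i + 1) - c i)) := by
  intro i hi
  have ht : 0 < 2 ^ p := pow_pos (by norm_num) p
  -- basic facts about nblocks
  have key1 : n ≤ 2 ^ p * nblocks n p := by
    have h := Nat.div_add_mod (n + 2 ^ p - 1) (2 ^ p)
    have h2 : (n + 2 ^ p - 1) % 2 ^ p < 2 ^ p := Nat.mod_lt _ ht
    unfold nblocks
    omega
  have key2 : nblocks n p * 2 ^ p ≤ n + 2 ^ p - 1 := Nat.div_mul_le_self _ _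
  have hlt : ∀ j, j < nblocks n p → j * 2 ^ p < n := by
    intro j hj
    have h3 : (j + 1) * 2 ^ p ≤ nblocks n p * 2 ^ p :=
      Nat.mul_le_mul_right _ (by omega)
    rw [add_one_mul] at h3
    rw [Nat.mul_comm] at key1
    omega
  have hi1 : i + 1 ≤ nblocks n p := hi
  have hs : i * 2 ^ p < n := hlt i hi
  obtain ⟨e', hE⟩ : ∃ e', e' = min n (i * 2 ^ p + 2 ^ p) := ⟨_, rfl⟩
  have hci1 : c i ≤ c (i + 1) := hmono (Nat.le_succ i)
  have hcin : c (i + 1) ≤ n := by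
    have h := hmono hi1
    rw [hcn] at h
    exact h
  -- lengths
  have hA : (blk X p i).length = e' - i * 2 ^ p := by
    simp only [blk, List.length_take, List.length_drop, hX]
    omega
  have hV : (blk Y p i).length = e' - i * 2 ^ p := by
    simp only [blk, List.length_take, List.length_drop, hY]
    omega
  have hBlen : ((Y.drop (c i)).take (c (i + 1) - c i)).length = c (i + 1) - c i := by
    simp only [List.length_take, List.length_drop, hY]
    omega
  set d := ED (blk X p i) ((Y.drop (c i)).take (c (i + 1) - c i)) with hd
  have hd1 : e' - i * 2 ^ p ≤ d + (c (i + 1) - c i) := by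
    have h := EDlib.len_le_left (blk X p i) ((Y.drop (c i)).take (c (i + 1) - c i))
    rw [hA, hBlen] at h
    omega
  have hd2 : c (i + 1) - c i ≤ d + (e' - i * 2 ^ p) := by
    have h := EDlib.len_le_right (blk X p i) ((Y.drop (c i)).take (c (i + 1) - c i))
    rw [hA, hBlen] at h
    omega
  -- the cut points stay within β of the block boundaries
  have Gsum : ∀ j, j ≤ nblocks n p →
      c j ≤ min n (j * 2 ^ p) +
          ∑ k ∈ Finset.range j, ED (blk X p k) ((Y.drop (c k)).take (c (k + 1) - c k)) ∧
      min n (j * 2 ^ p) ≤ c j +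
          ∑ k ∈ Finset.range j, ED (blk X p k) ((Y.drop (c k)).take (c (k + 1) - c k)) := by
    intro j
    induction j with
    | zero => simp [hc0]
    | succ j ihj =>
      intro hj
      obtain ⟨g1, g2⟩ := ihj (by omega)
      have hjlt : j * 2 ^ p < n := hlt j (by omega)
      have hcj1 : c j ≤ c (j + 1) := hmono (Nat.le_succ j)
      have hcjn : c (j + 1) ≤ n := by
        have h := hmono hj
        rw [hcn] at h
        exact h
      have hAj : (blk X p j).length = min n (j * 2 ^ p + 2 ^ p) - j * 2 ^ p := by
        simp only [blk, List.length_take, List.length_drop, hX]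
        omega
      have hBj : ((Y.drop (c j)).take (c (j + 1) - c j)).length = c (j + 1) - c j := by
        simp only [List.length_take, List.length_drop, hY]
        omega
      have l1 := EDlib.len_le_left (blk X p j) ((Y.drop (c j)).take (c (j + 1) - c j))
      have l2 := EDlib.len_le_right (blk X p j) ((Y.drop (c j)).take (c (j + 1) - c j))
      rw [hAj, hBj] at l1 l2
      rw [Finset.sum_range_succ, add_one_mul]
      omega
  have hsumβ : ∀ j, j ≤ nblocks n p →
      ∑ k ∈ Finset.range j, ED (blk X p k) ((Y.drop (c k)).take (c (k + 1) - c k)) ≤ β := by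
    intro j hj
    have h : (∑ k ∈ Finset.range j, ED (blk X p k) ((Y.drop (c k)).take (c (k + 1) - c k))) ≤
        ∑ k ∈ Finset.range (nblocks n p),
          ED (blk X p k) ((Y.drop (c k)).take (c (k + 1) - c k)) :=
      Finset.sum_le_sum_of_subset (Finset.range_subset_range.mpr hj)
    omega
  have Gi : c i ≤ min n (i * 2 ^ p) + β ∧ min n (i * 2 ^ p) ≤ c i + β := by
    obtain ⟨g1, g2⟩ := Gsum i (by omega)
    have h := hsumβ i (by omega)
    omega
  have Gi1 : c (i + 1) ≤ e' + β ∧ e' ≤ c (i + 1) + β := by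
    obtain ⟨g1, g2⟩ := Gsum (i + 1) hi1
    have h := hsumβ (i + 1) hi1
    rw [add_one_mul] at g1 g2
    omega
  -- piece rewriting helpers
  have Vtake : ∀ Δ, (blk Y p i).take ((blk Y p i).length - Δ) =
      (Y.drop (i * 2 ^ p)).take (e' - i * 2 ^ p - Δ) := by
    intro Δ
    rw [hV]
    simp only [blk]
    rw [List.take_take]
    congr 1
    omega
  have Vdrop : ∀ Δ, (blk Y p i).drop Δ = (Y.drop (i * 2 ^ p + Δ)).take (e' - i * 2 ^ p - Δ) := by
    intro Δ
    simp only [blk]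
    rw [List.drop_take, List.drop_drop]
    refine List.take_eq_take_iff.mpr ?_
    simp only [List.length_drop, hY]
    omega
  have Bdrop : ∀ r, ((Y.drop (c i)).take (c (i + 1) - c i)).drop r =
      (Y.drop (c i + r)).take (c (i + 1) - c i - r) := by
    intro r
    rw [List.drop_take, List.drop_drop]
  -- the "empty pieces" shortcut
  have empty : e' - i * 2 ^ p ≤ β →
      EDs β (blk X p i) (blk Y p i) ≤ 2 * d := by
    intro h
    apply EDlib.EDs_le_A β _ _ (e' - i * 2 ^ p) (by rw [hA]) (by rw [hV]) h
    have u1 : (blk X p i).drop (e' - i * 2 ^ p) = [] := by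
      rw [← hA]
      exact List.drop_length
    rw [u1, hV, Nat.sub_self]
    simp [EDlib.ED_nil_left]
  rcases le_or_gt (c i) (i * 2 ^ p) with hcase | hcase
  · -- Case 1 : c i ≤ s
    rcases lt_or_ge (c (i + 1)) (i * 2 ^ p) with h1c | h1c
    · exact empty (by omega)
    · rcases le_or_gt (c (i + 1)) e' with h2c | h2c
      · -- 1a
        apply EDlib.EDs_le_A β _ _ (e' - c (i + 1)) (by rw [hA]; omega) (by rw [hV]; omega)
          (by omega)
        rw [Vtake]
        have hB' : (Y.drop (i * 2 ^ p)).take (e' - i * 2 ^ p - (e' - c (i + 1))) =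
            ((Y.drop (c i)).take (c (i + 1) - c i)).drop (i * 2 ^ p - c i) := by
          rw [Bdrop]
          rw [show c i + (i * 2 ^ p - c i) = i * 2 ^ p from by omega]
          congr 1
          omega
        rw [hB']
        have h := EDlib.drop_gen (blk X p i) ((Y.drop (c i)).take (c (i + 1) - c i))
          (e' - c (i + 1)) (i * 2 ^ p - c i)
        omega
      · -- 1b
        rcases lt_or_ge (e' - i * 2 ^ p) (i * 2 ^ p - c i) with h3c | h3c
        · exact empty (by omega)
        · apply EDlib.EDs_le_A β _ _ (i * 2 ^ p - c i) (by rw [hA]; omega) (by rw [hV]; omega)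
            (by omega)
          rw [Vtake]
          have hB' : (Y.drop (i * 2 ^ p)).take (e' - i * 2 ^ p - (i * 2 ^ p - c i)) =
              (((Y.drop (c i)).take (c (i + 1) - c i)).drop (i * 2 ^ p - c i)).take
                (e' - i * 2 ^ p - (i * 2 ^ p - c i)) := by
            rw [Bdrop]
            rw [show c i + (i * 2 ^ p - c i) = i * 2 ^ p from by omega]
            rw [List.take_take]
            congr 1
            omega
          rw [hB']
          have h1 := EDlib.take_right ((blk X p i).drop (i * 2 ^ p - c i))
            (((Y.drop (c i)).take (c (i + 1) - c i)).drop (i * 2 ^ p - c i))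
            (e' - i * 2 ^ p - (i * 2 ^ p - c i))
          have h2 := EDlib.drop_both (blk X p i) ((Y.drop (c i)).take (c (i + 1) - c i))
            (i * 2 ^ p - c i)
          have h3 : (((Y.drop (c i)).take (c (i + 1) - c i)).drop (i * 2 ^ p - c i)).length =
              c (i + 1) - c i - (i * 2 ^ p - c i) := by
            rw [List.length_drop, hBlen]
          rw [h3] at h1
          omega
  · -- Case 2 : s < c i
    rcases lt_or_ge e' (c i) with h1c | h1c
    · exact empty (by omega)
    · have hVd : (blk Y p i).drop (c i - i * 2 ^ p) =
          (Y.drop (c i)).take (e' - c i) := by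
        rw [Vdrop]
        rw [show i * 2 ^ p + (c i - i * 2 ^ p) = c i from by omega]
        congr 1
        omega
      rcases le_or_gt e' (c (i + 1)) with h2c | h2c
      · -- 2a
        apply EDlib.EDs_le_B β _ _ (c i - i * 2 ^ p) (by rw [hA]; omega) (by rw [hV]; omega)
          (by omega)
        rw [hVd, hA]
        have hB' : (Y.drop (c i)).take (e' - c i) =
            ((Y.drop (c i)).take (c (i + 1) - c i)).take (e' - c i) := by
          rw [List.take_take]
          congr 1
          omega
        rw [hB']
        have h := EDlib.take_both (blk X p i) ((Y.drop (c i)).take (c (i + 1) - c i))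
          (e' - i * 2 ^ p - (c i - i * 2 ^ p)) (e' - c i)
        rw [hA, hBlen] at h
        omega
      · -- 2b
        apply EDlib.EDs_le_B β _ _ (c i - i * 2 ^ p) (by rw [hA]; omega) (by rw [hV]; omega)
          (by omega)
        rw [hVd, hA]
        rw [show e' - c i = (c (i + 1) - c i) + (e' - c (i + 1)) from by omega, List.take_add]
        have h1 := EDlib.append_right ((blk X p i).take (e' - i * 2 ^ p - (c i - i * 2 ^ p)))
          ((Y.drop (c i)).take (c (i + 1) - c i))
          (((Y.drop (c i)).drop (c (i + 1) - c i)).take (e' - c (i + 1)))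
        have h2 := EDlib.take_left (blk X p i) ((Y.drop (c i)).take (c (i + 1) - c i))
          (e' - i * 2 ^ p - (c i - i * 2 ^ p))
        have h3 : (((Y.drop (c i)).drop (c (i + 1) - c i)).take (e' - c (i + 1))).length =
            e' - c (i + 1) := by
          simp only [List.length_take, List.length_drop, hY]
          omega
        rw [hA] at h2
        omega
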